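/- Let G₁ and G₂ be connected finite simple graphs on vertex sets {1,…,k₁} and {1,…,k₂} with Laplacian matrices L₁ and L₂, let s ∈ {1,…,k₂}, and suppose there is a nonempty set P ⊆ {1,…,k₁} such that every eigenvector of L₁ has nonzero entries at all positions in P, and every eigenvector of L₂ has a nonzero s-th entry. Then every eigenvector of the composite matrix L = I_{k₁} ⊗ L₂ + L₁ ⊗ (e_s e_sᵀ) has a nonzero entry at position (i, s) for every i ∈ P. -/

import Mathlib

/-- The composite matrix `L = I_{k₁} ⊗ L₂ + L₁ ⊗ (e_s e_sᵀ)`, indexed by pairs. -/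
def composite {k₁ k₂ : ℕ} (L₁ : Matrix (Fin k₁) (Fin k₁) ℝ) (L₂ : Matrix (Fin k₂) (Fin k₂) ℝ)
    (s : Fin k₂) : Matrix (Fin k₁ × Fin k₂) (Fin k₁ × Fin k₂) ℝ :=
  Matrix.of fun p q =>
    (if p.1 = q.1 then L₂ p.2 q.2 else 0) +
    L₁ p.1 q.1 * ((if p.2 = s then (1 : ℝ) else 0) * (if q.2 = s then (1 : ℝ) else 0))

lemma composite_expand {k₁ k₂ : ℕ} (L₁ : Matrix (Fin k₁) (Fin k₁) ℝ)
    (L₂ : Matrix (Fin k₂) (Fin k₂) ℝ)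
    (s : Fin k₂) (w : Fin k₁ × Fin k₂ → ℝ) (p : Fin k₁ × Fin k₂) :
    (composite L₁ L₂ s).mulVec w p =
      L₂.mulVec (fun b => w (p.1, b)) p.2 +
        (if p.2 = s then L₁.mulVec (fun j => w (j, s)) p.1 else 0) := by
  obtain ⟨i, a⟩ := p
  simp only [Matrix.mulVec, dotProduct, composite, Matrix.of_apply, Fintype.sum_prod_type,
    add_mul, Finset.sum_add_distrib, ite_mul, zero_mul, one_mul, mul_ite, mul_zero, mul_one]
  rw [Finset.sum_comm]
  simp [Finset.sum_ite_eq, Finset.sum_ite_eq']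

theorem stmt_4 (k₁ k₂ : ℕ)
    (G₁ : SimpleGraph (Fin k₁)) [DecidableRel G₁.Adj] (hG₁ : G₁.Connected)
    (G₂ : SimpleGraph (Fin k₂)) [DecidableRel G₂.Adj] (hG₂ : G₂.Connected)
    (s : Fin k₂) (P : Set (Fin k₁)) (hP : P.Nonempty)
    (h₁ : ∀ v : Fin k₁ → ℝ, v ≠ 0 → (∃ μ : ℝ, (G₁.lapMatrix ℝ).mulVec v = μ • v) →
      ∀ i ∈ P, v i ≠ 0)
    (h₂ : ∀ v : Fin k₂ → ℝ, v ≠ 0 → (∃ μ : ℝ, (G₂.lapMatrix ℝ).mulVec v = μ • v) → v s ≠ 0) :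
    ∀ w : Fin k₁ × Fin k₂ → ℝ, w ≠ 0 →
      (∃ μ : ℝ, (composite (G₁.lapMatrix ℝ) (G₂.lapMatrix ℝ) s).mulVec w = μ • w) →
      ∀ i ∈ P, w (i, s) ≠ 0 := by
  intro w hw hex i hi h0
  obtain ⟨μ, hμ⟩ := hex
  set L₁ := G₁.lapMatrix ℝ with hL₁
  set L₂ := G₂.lapMatrix ℝ with hL₂
  set u : Fin k₁ → ℝ := fun j => w (j, s) with hu
  set c : Fin k₁ → ℝ := L₁.mulVec u with hc
  -- the key componentwise equation
  have key : ∀ (j : Fin k₁) (a : Fin k₂),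
      L₂.mulVec (fun b => w (j, b)) a + (if a = s then c j else 0) = μ * w (j, a) := by
    intro j a
    have := congrFun hμ (j, a)
    rw [composite_expand] at this
    simpa using this
  -- e_s
  set es : Fin k₂ → ℝ := fun b => if b = s then 1 else 0 with hes
  have keyv : ∀ j : Fin k₁,
      (L₂ - μ • 1).mulVec (fun b => w (j, b)) = (-(c j)) • es := by
    intro j
    funext a
    have := key j a
    simp only [Matrix.sub_mulVec, Matrix.smul_mulVec, Matrix.one_mulVec, Pi.sub_apply,
      Pi.smul_apply, smul_eq_mul, hes]
    by_cases ha : a = s <;> simp [ha] at this ⊢ <;> linarith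
  -- contradiction: u is never an eigenvector and also key facts
  by_cases hev : ∃ z : Fin k₂ → ℝ, z ≠ 0 ∧ L₂.mulVec z = μ • z
  · -- μ is an eigenvalue of L₂ : show c = 0 via symmetry
    obtain ⟨z, hz0, hz⟩ := hev
    have hzs : z s ≠ 0 := h₂ z hz0 ⟨μ, hz⟩
    have hc0 : ∀ j, c j = 0 := by
      intro j
      have hsym2 : L₂.transpose = L₂ := SimpleGraph.isSymm_lapMatrix ℝ G₂
      have hsymm : (L₂ - μ • 1).transpose = (L₂ - μ • 1) := by
        rw [Matrix.transpose_sub, Matrix.transpose_smul, Matrix.transpose_one, hsym2]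
      have hdz : dotProduct z ((L₂ - μ • 1).mulVec (fun b => w (j, b))) =
          dotProduct ((L₂ - μ • 1).mulVec z) (fun b => w (j, b)) := by
        rw [Matrix.dotProduct_mulVec, ← Matrix.mulVec_transpose, hsymm]
      have hMz : (L₂ - μ • 1).mulVec z = 0 := by
        rw [Matrix.sub_mulVec, Matrix.smul_mulVec, Matrix.one_mulVec, hz]
        simp
      rw [hMz, keyv j] at hdz
      simp only [zero_dotProduct, dotProduct_smul, smul_eq_mul] at hdz
      have : dotProduct z es = z s := by simp [hes, dotProduct]
      rw [this] at hdz
      rcases mul_eq_zero.mp hdz with h | h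
      · linarith [neg_eq_zero.mp h]
      · exact absurd h hzs
    by_cases hu0 : u = 0
    · -- all slices are eigenvectors of L₂ with zero s-entry
      obtain ⟨p, hp⟩ : ∃ p, w p ≠ 0 := by
        by_contra h; push_neg at h; exact hw (funext h)
      set v : Fin k₂ → ℝ := fun b => w (p.1, b) with hv
      have hv0 : v ≠ 0 := fun h => hp (by
        have := congrFun h p.2; simpa [hv] using this)
      have hveig : L₂.mulVec v = μ • v := by
        funext a
        have := key p.1 a
        rw [hc0 p.1] at this
        simpa [hv] using this
      have hvs : v s = 0 := by
        have := congrFun hu0 p.1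
        simpa [hu, hv] using this
      exact (h₂ v hv0 ⟨μ, hveig⟩) hvs
    · -- u is an eigenvector of L₁ with eigenvalue 0
      have : L₁.mulVec u = (0 : ℝ) • u := by
        funext j; simpa [hc] using hc0 j
      exact h₁ u hu0 ⟨0, this⟩ i hi h0
  · -- μ not an eigenvalue of L₂: M := L₂ - μ•1 invertible
    push_neg at hev
    set M := L₂ - μ • (1 : Matrix (Fin k₂) (Fin k₂) ℝ) with hM
    have hinj : Function.Injective M.mulVecLin := by
      rw [← LinearMap.ker_eq_bot, LinearMap.ker_eq_bot']
      intro x hx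
      by_contra hx0
      have : L₂.mulVec x = μ • x := by
        have : M.mulVec x = 0 := hx
        rw [hM, Matrix.sub_mulVec, Matrix.smul_mulVec, Matrix.one_mulVec,
          sub_eq_zero] at this
        exact this
      exact hev x hx0 this
    have hsurj : Function.Surjective M.mulVecLin :=
      (LinearMap.injective_iff_surjective).mp hinj
    obtain ⟨y, hy⟩ := hsurj es
    have hslice : ∀ j, (fun b => w (j, b)) = (-(c j)) • y := by
      intro j
      apply hinj
      show M.mulVec _ = M.mulVec _
      rw [keyv j, Matrix.mulVec_smul]
      rw [show M.mulVec y = es from hy]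
    have hus : ∀ j, u j = -(c j) * y s := by
      intro j
      have := congrFun (hslice j) s
      simpa [hu] using this
    by_cases hu0 : u = 0
    · -- then c = 0, all slices zero, contradiction with w ≠ 0
      have hc0 : c = 0 := by rw [hc, hu0, Matrix.mulVec_zero]
      apply hw
      funext p
      have := congrFun (hslice p.1) p.2
      simp only [hc0, Pi.zero_apply, neg_zero, zero_smul] at this
      simpa using this
    · by_cases hys : y s = 0
      · exact hu0 (funext fun j => by rw [hus j, hys, mul_zero]; rfl)
      · -- u is an eigenvector with eigenvalue -1/(y s)
        have : L₁.mulVec u = (-(y s)⁻¹) • u := by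
          funext j
          have h := hus j
          show c j = -(y s)⁻¹ * u j
          field_simp
          nlinarith [h]
        exact h₁ u hu0 ⟨-(y s)⁻¹, this⟩ i hi h0
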